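/- arXiv:1810.04536 — 3 statements merged into one kernel-verified Lean document; each statement's English description precedes it below -/
import Mathlib

section
/- Let C be a t-error-correcting binary [n,k,d]-code (2t+1 ≤ d) with reduced Groebner basis G as in the standard-form construction, and let v ∈ F_2^n be a received word with at most t errors, i.e., there is c ∈ C with d(v,c) ≤ t. If the remainder of X^v − 1 on division by G represents a vector of weight at most t, then (X^v − 1) − remainder represents the unique codeword closest to v, and the error vector v − c is supported in the last n − k coordinates. -/
open MvPolynomial
open scoped MonomialOrder

/-- The leading (multidegree) exponent of a polynomial with respect to a monomial order. -/
noncomputable def leadExp {σ K : Type*} [Field K] (m : MonomialOrder σ)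
    (f : MvPolynomial σ K) : σ →₀ ℕ :=
  m.toSyn.symm (f.support.sup fun d => m.toSyn d)

/-- The leading term of a polynomial with respect to a monomial order. -/
noncomputable def leadTerm {σ K : Type*} [Field K] (m : MonomialOrder σ)
    (f : MvPolynomial σ K) : MvPolynomial σ K :=
  monomial (leadExp m f) (f.coeff (leadExp m f))

/-- `G` is a Groebner basis of the ideal `I` for the monomial order `m`. -/
def IsGroebnerBasis {σ K : Type*} [Field K] (m : MonomialOrder σ)
    (I : Ideal (MvPolynomial σ K)) (G : Set (MvPolynomial σ K)) : Prop :=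
  G.Finite ∧ G ⊆ (I : Set (MvPolynomial σ K)) ∧
    Ideal.span (leadTerm m '' G) = Ideal.span (leadTerm m '' {f | f ∈ I ∧ f ≠ 0})

/-- A reduced Groebner basis: all elements monic, and no monomial of an element lies in
the ideal generated by the leading terms of the other elements. -/
def IsReducedGB {σ K : Type*} [Field K] (m : MonomialOrder σ)
    (G : Set (MvPolynomial σ K)) : Prop :=
  ∀ p ∈ G, p.coeff (leadExp m p) = 1 ∧
    ∀ c ∈ p.support, (monomial c (1 : K)) ∉ Ideal.span (leadTerm m '' (G \ {p}))

/-- `r` is a remainder of `f` on division by `G` (relative to the ideal `I`):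
`f - r ∈ I` and no monomial of `r` is divisible by the leading monomial
of any nonzero element of `G`. -/
def IsRemainder {σ K : Type*} [Field K] (m : MonomialOrder σ)
    (I : Ideal (MvPolynomial σ K)) (G : Set (MvPolynomial σ K))
    (f r : MvPolynomial σ K) : Prop :=
  f - r ∈ I ∧ ∀ c ∈ r.support, ∀ g ∈ G, g ≠ 0 → ¬ leadExp m g ≤ c

/-- The exponent vector in `ℕ^n` associated with a binary word. -/
noncomputable def expOf {n : ℕ} (c : Fin n → ZMod 2) : Fin n →₀ ℕ :=
  Finsupp.equivFunOnFinite.symm fun i => (c i).val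

/-- The monomial `X^c` associated with a binary word `c`. -/
noncomputable def Xw (K : Type*) [Field K] {n : ℕ} (c : Fin n → ZMod 2) :
    MvPolynomial (Fin n) K :=
  monomial (expOf c) 1

/-- The code ideal `I_C = ⟨X^c − X^{c'} : c − c' ∈ C⟩ + ⟨X_i^2 − 1 : 1 ≤ i ≤ n⟩`. -/
noncomputable def codeIdeal (K : Type*) [Field K] {n : ℕ}
    (C : Submodule (ZMod 2) (Fin n → ZMod 2)) : Ideal (MvPolynomial (Fin n) K) :=
  Ideal.span ({f | ∃ c c' : Fin n → ZMod 2, c - c' ∈ C ∧ f = Xw K c - Xw K c'} ∪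
    {f | ∃ i : Fin n, f = X i ^ 2 - 1})

/-- `g` is a generating matrix in standard form `(I_k | M)` for the code `C`:
its rows span `C` and its first `k` columns form the identity matrix. -/
def IsStandardGenMatrix {n k : ℕ} (hk : k ≤ n) (C : Submodule (ZMod 2) (Fin n → ZMod 2))
    (g : Fin k → Fin n → ZMod 2) : Prop :=
  C = Submodule.span (ZMod 2) (Set.range g) ∧
    ∀ i j : Fin k, g i (Fin.castLE hk j) = if i = j then 1 else 0

/-- The word `m_i = (0,…,0, g_{i,k+1},…,g_{i,n})` built from the `i`-th row of `g`. -/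
def mrow {n k : ℕ} (g : Fin k → Fin n → ZMod 2) (i : Fin k) : Fin n → ZMod 2 :=
  fun j => if (j : ℕ) < k then 0 else g i j

/-- The set `{X_i − X^{m_i} : 1 ≤ i ≤ k} ∪ {X_j^2 − 1 : k+1 ≤ j ≤ n}`. -/
noncomputable def gbSet (K : Type*) [Field K] {n k : ℕ} (hk : k ≤ n)
    (g : Fin k → Fin n → ZMod 2) : Set (MvPolynomial (Fin n) K) :=
  (Set.range fun i : Fin k => X (Fin.castLE hk i) - Xw K (mrow g i)) ∪
    {f | ∃ j : Fin n, k ≤ (j : ℕ) ∧ f = X j ^ 2 - 1}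

section Aux

variable {K : Type*} [Field K] {n : ℕ}

open Finsupp

/-- product of monoid-algebra singles -/
lemma prod_single_pow {M : Type*} [AddCommMonoid M] (a : Fin n → M) (α : Fin n →₀ ℕ)
    (s : Finset (Fin n)) :
    (∏ i ∈ s, AddMonoidAlgebra.single (a i) (1 : K) ^ α i) =
      AddMonoidAlgebra.single (∑ i ∈ s, α i • a i) 1 := by
  classical
  induction s using Finset.induction with
  | empty => simp [AddMonoidAlgebra.one_def]
  | insert _ _ hx ih =>
      rw [Finset.prod_insert hx, Finset.sum_insert hx, ih,
        AddMonoidAlgebra.single_pow, AddMonoidAlgebra.single_mul_single]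
      simp

noncomputable def psi (C : Submodule (ZMod 2) (Fin n → ZMod 2)) :
    MvPolynomial (Fin n) K →ₐ[K] AddMonoidAlgebra K ((Fin n → ZMod 2) ⧸ C) :=
  MvPolynomial.aeval fun i =>
    AddMonoidAlgebra.single (Submodule.Quotient.mk (Pi.single i (1 : ZMod 2))) (1 : K)

lemma psi_Xw (C : Submodule (ZMod 2) (Fin n → ZMod 2)) (u : Fin n → ZMod 2) :
    psi (K := K) C (Xw K u) = AddMonoidAlgebra.single (Submodule.Quotient.mk u) 1 := by
  classical
  rw [Xw, psi, MvPolynomial.aeval_monomial, map_one, one_mul]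
  rw [Finsupp.prod]
  rw [Finset.prod_subset (Finset.subset_univ (expOf u).support)
    (by intro i _ hi; simp [Finsupp.notMem_support_iff.mp hi])]
  rw [prod_single_pow]
  congr 1
  have : (∑ i : Fin n, (expOf u) i • Submodule.Quotient.mk (p := C) (Pi.single i (1 : ZMod 2)))
      = Submodule.Quotient.mk (∑ i : Fin n, (expOf u) i • Pi.single i (1 : ZMod 2)) := by
    simp only [← Submodule.mkQ_apply, ← map_nsmul, ← map_sum]
  rw [this]
  congr 1
  funext j
  rw [Finset.sum_apply]
  have h1 : ∀ i : Fin n, (((expOf u) i • Pi.single i (1 : ZMod 2) : Fin n → ZMod 2)) j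
      = if i = j then ((u j).val : ZMod 2) else 0 := by
    intro i
    by_cases h : i = j
    · subst h; simp [expOf, Pi.single_apply, nsmul_eq_mul]
    · simp [Pi.single_apply, Ne.symm h, h]
  rw [Finset.sum_congr rfl fun i _ => h1 i]
  simp [ZMod.natCast_val, ZMod.cast_id]

lemma psi_vanish (C : Submodule (ZMod 2) (Fin n → ZMod 2)) :
    codeIdeal K C ≤ RingHom.ker (psi (K := K) C).toRingHom := by
  rw [codeIdeal, Ideal.span_le]
  rintro f (⟨c, c', hcc, rfl⟩ | ⟨i, rfl⟩)
  · simp only [SetLike.mem_coe, RingHom.mem_ker, AlgHom.toRingHom_eq_coe, RingHom.coe_coe,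
      map_sub, psi_Xw]
    rw [(Submodule.Quotient.eq C).mpr hcc, sub_self]
  · simp only [SetLike.mem_coe, RingHom.mem_ker, AlgHom.toRingHom_eq_coe, RingHom.coe_coe,
      map_sub, map_one, map_pow]
    have : psi (K := K) C (MvPolynomial.X i)
        = AddMonoidAlgebra.single (Submodule.Quotient.mk (Pi.single i (1 : ZMod 2))) (1 : K) := by
      simp [psi]
    rw [this, AddMonoidAlgebra.single_pow]
    have h2 : (2 : ℕ) • (Submodule.Quotient.mk (p := C) (Pi.single i (1 : ZMod 2))) = 0 := by
      simp only [← Submodule.mkQ_apply, ← map_nsmul]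
      have : (2 : ℕ) • (Pi.single i (1 : ZMod 2)) = (0 : Fin n → ZMod 2) := by
        funext j
        simp [Pi.single_apply, two_smul]
        intro h
        decide
      rw [this, map_zero]
    rw [h2, one_pow, ← AddMonoidAlgebra.one_def, sub_self]

lemma mem_code_of_ideal (C : Submodule (ZMod 2) (Fin n → ZMod 2)) (v e : Fin n → ZMod 2)
    (h : Xw K v - Xw K e ∈ codeIdeal K C) : v - e ∈ C := by
  have := psi_vanish (K := K) C h
  rw [RingHom.mem_ker] at this
  simp only [AlgHom.toRingHom_eq_coe, RingHom.coe_coe, map_sub, psi_Xw] at this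
  have heq : AddMonoidAlgebra.single (Submodule.Quotient.mk (p := C) v) (1 : K)
      = AddMonoidAlgebra.single (Submodule.Quotient.mk (p := C) e) 1 := by
    exact sub_eq_zero.mp this
  have : Submodule.Quotient.mk (p := C) v = Submodule.Quotient.mk e :=
    (AddMonoidAlgebra.single_left_inj one_ne_zero).mp heq
  exact (Submodule.Quotient.eq C).mp this

end Aux

/-- let `C` be a `t`-error-correcting binary `[n,k,d]` code (`2t+1 ≤ d`)
with standard-form reduced Groebner basis `gbSet`, and let `v` be a received word with at
most `t` errors. If the remainder `X^e − 1` of `X^v − 1` on division by the basis has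
weight `w(e) ≤ t`, then `v − e` is the unique codeword closest to `v` (any other codeword
is at distance `> t`), and the error vector `e` is supported in the last `n − k`
coordinates. -/
theorem decode_low_weight_remainder (K : Type*) [Field K] {n k : ℕ} (hk : k ≤ n)
    (C : Submodule (ZMod 2) (Fin n → ZMod 2)) (g : Fin k → Fin n → ZMod 2)
    (hg : IsStandardGenMatrix hk C g) (d t : ℕ)
    (hd : ∀ x ∈ C, x ≠ 0 → d ≤ hammingNorm x) (ht : 2 * t + 1 ≤ d)
    (v : Fin n → ZMod 2) (hv : ∃ c ∈ C, hammingDist v c ≤ t)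
    (e : Fin n → ZMod 2)
    (hrem : IsRemainder MonomialOrder.lex (codeIdeal K C) (gbSet K hk g)
      (Xw K v - 1) (Xw K e - 1))
    (hwe : hammingNorm e ≤ t) :
    v - e ∈ C ∧ (∀ c' ∈ C, c' ≠ v - e → t < hammingDist v c') ∧
      ∀ j : Fin n, (j : ℕ) < k → e j = 0 := by
  classical
  have hideal : Xw K v - Xw K e ∈ codeIdeal K C := by
    have h := hrem.1
    rw [sub_sub_sub_cancel_right] at h
    exact h
  have h1 : v - e ∈ C := mem_code_of_ideal C v e hideal
  refine ⟨h1, ?_, ?_⟩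
  · intro c' hc' hne
    have hne0 : (v - e) - c' ≠ 0 := sub_ne_zero.mpr (Ne.symm hne)
    have hmem : (v - e) - c' ∈ C := Submodule.sub_mem C h1 hc'
    have hdle : d ≤ hammingNorm ((v - e) - c') := hd _ hmem hne0
    have htri : hammingNorm ((v - e) - c') ≤ hammingNorm (v - c') + hammingNorm e := by
      have h2 : (v - e) - c' = (v - c') - e := by ring
      rw [h2, show v - c' - e = -e + (v - c') by abel, ← hammingDist_eq_hammingNorm, hammingDist_comm]
      calc hammingDist (v - c') e ≤ hammingDist (v - c') 0 + hammingDist 0 e :=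
            hammingDist_triangle _ _ _
        _ = hammingNorm (v - c') + hammingNorm e := by
            rw [hammingDist_zero_right, hammingDist_zero_left]
    rw [hammingDist_comm, hammingDist_eq_hammingNorm, show -c' + v = v - c' by abel]
    omega
  · intro j hj
    by_contra hej
    set j' : Fin k := ⟨(j : ℕ), hj⟩ with hj'
    have hcast : Fin.castLE hk j' = j := rfl
    set f : MvPolynomial (Fin n) K := X (Fin.castLE hk j') - Xw K (mrow g j') with hf
    have hfG : f ∈ gbSet K hk g := Or.inl ⟨j', rfl⟩
    have hb0 : ∀ i : Fin n, (i : ℕ) < k → expOf (mrow g j') i = 0 := by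
      intro i hi
      show (mrow g j' i).val = 0
      simp [mrow, hi]
    have hba : expOf (mrow g j') ≠ Finsupp.single j 1 := by
      intro h
      have := DFunLike.congr_fun h j
      rw [hb0 j hj] at this
      simp at this
    have hXj : (X (Fin.castLE hk j') : MvPolynomial (Fin n) K)
        = monomial (Finsupp.single j 1) 1 := by rw [hcast]; rfl
    have hcoefa : f.coeff (Finsupp.single j 1) = 1 := by
      rw [hf, hXj, Xw, MvPolynomial.coeff_sub, MvPolynomial.coeff_monomial,
        MvPolynomial.coeff_monomial, if_pos rfl, if_neg hba]
      ring
    have hfne : f ≠ 0 := fun h0 => by simp [h0] at hcoefa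
    have hamem : Finsupp.single j 1 ∈ f.support := by
      rw [MvPolynomial.mem_support_iff, hcoefa]; exact one_ne_zero
    have hsupp : f.support ⊆ {Finsupp.single j 1, expOf (mrow g j')} := by
      intro c hc
      have h2 := MvPolynomial.support_sub _ _ _ hc
      rw [hXj, Xw] at h2
      rw [MvPolynomial.support_monomial, MvPolynomial.support_monomial] at h2
      simp only [if_neg (one_ne_zero (α := K))] at h2
      simpa using h2
    have hlt : MonomialOrder.lex.toSyn (expOf (mrow g j'))
        < MonomialOrder.lex.toSyn (Finsupp.single j 1) := by
      rw [MonomialOrder.lex_lt_iff, Finsupp.Lex.lt_iff]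
      refine ⟨j, fun i hi => ?_, ?_⟩
      · show expOf (mrow g j') i = Finsupp.single j 1 i
        rw [hb0 i (lt_trans (show (i:ℕ) < (j:ℕ) from hi) hj),
          Finsupp.single_apply, if_neg (by exact fun h => absurd (h ▸ hi) (lt_irrefl _))]
      · show expOf (mrow g j') j < Finsupp.single j 1 j
        rw [hb0 j hj, Finsupp.single_apply, if_pos rfl]
        exact Nat.zero_lt_one
    have hsup : (f.support.sup fun d => MonomialOrder.lex.toSyn d)
        = MonomialOrder.lex.toSyn (Finsupp.single j 1) := by
      refine le_antisymm (Finset.sup_le fun c hc => ?_) (Finset.le_sup hamem)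
      rcases Finset.mem_insert.mp (hsupp hc) with h | h
      · rw [h]
      · rw [Finset.mem_singleton.mp h]; exact le_of_lt hlt
    have hlead : leadExp MonomialOrder.lex f = Finsupp.single j 1 := by
      rw [leadExp, hsup]; exact AddEquiv.symm_apply_apply _ _
    have heval : (e j).val ≠ 0 := fun h => hej ((ZMod.val_eq_zero _).mp h)
    have hemem : expOf e ∈ (Xw K e - 1).support := by
      rw [MvPolynomial.mem_support_iff, MvPolynomial.coeff_sub, Xw,
        MvPolynomial.coeff_monomial, if_pos rfl, MvPolynomial.coeff_one,
        if_neg (fun hzero => heval (show (e j).val = 0 by simpa [expOf] using (DFunLike.congr_fun hzero j).symm))]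
      simp
    have := hrem.2 (expOf e) hemem f hfG hfne
    rw [hlead] at this
    exact this (Finsupp.single_le_iff.mpr (Nat.one_le_iff_ne_zero.mpr heval))
end

section
/- For the code ideal I_C of a binary [n,k]-code C and its standard-form reduced Groebner basis G (lex order X_1 > ... > X_n), two words u, v ∈ F_2^n satisfy u − v ∈ C if and only if the remainders of X^u − 1 and X^v − 1 on division by G coincide. -/
open MvPolynomial
open scoped MonomialOrder

/-! ### Auxiliary material -/

/-- The word associated with an exponent vector. -/
def wdOf {n : ℕ} (d : Fin n →₀ ℕ) : Fin n → ZMod 2 := fun j => (d j : ZMod 2)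

/-- The algebra map to the group algebra of the quotient group. -/
noncomputable def qmap (K : Type*) [Field K] {n : ℕ}
    (C : Submodule (ZMod 2) (Fin n → ZMod 2)) :
    MvPolynomial (Fin n) K →ₐ[K] AddMonoidAlgebra K ((Fin n → ZMod 2) ⧸ C) :=
  aeval fun i => AddMonoidAlgebra.single (Submodule.Quotient.mk (Pi.single i 1)) 1

theorem qmap_monomial (K : Type*) [Field K] {n : ℕ}
    (C : Submodule (ZMod 2) (Fin n → ZMod 2)) (d : Fin n →₀ ℕ) (c : K) :
    qmap K C (monomial d c)
      = AddMonoidAlgebra.single (Submodule.Quotient.mk (wdOf d)) c := by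
  rw [qmap, aeval_monomial, Finsupp.prod]
  simp only [AddMonoidAlgebra.single_pow, one_pow]
  rw [AddMonoidAlgebra.prod_single]
  have key : (∑ i ∈ d.support, d i • Submodule.Quotient.mk (p := C) (Pi.single i 1))
      = Submodule.Quotient.mk (wdOf d) := by
    have h1 : ∀ i, d i • Submodule.Quotient.mk (p := C) (Pi.single i 1)
        = Submodule.Quotient.mk (Pi.single i ((d i : ZMod 2))) := by
      intro i
      have : d i • Submodule.Quotient.mk (p := C) (Pi.single i 1)
          = Submodule.Quotient.mk (d i • Pi.single i (1 : ZMod 2)) := by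
        exact (map_nsmul C.mkQ _ _).symm
      rw [this]
      congr 1
      funext j
      by_cases hji : j = i
      · subst hji; simp [nsmul_eq_mul]
      · simp [Pi.single_apply, hji]
    rw [Finset.sum_congr rfl fun i _ => h1 i]
    have h2 : (∑ i ∈ d.support, Submodule.Quotient.mk (p := C) (Pi.single i ((d i : ZMod 2))))
        = ∑ i : Fin n, Submodule.Quotient.mk (p := C) (Pi.single i ((d i : ZMod 2))) := by
      refine Finset.sum_subset (Finset.subset_univ _) ?_
      intro i _ hi
      rw [Finsupp.notMem_support_iff.mp hi]
      simp
    rw [h2]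
    have h3 : ∀ i : Fin n, Submodule.Quotient.mk (p := C) (Pi.single i ((d i : ZMod 2)))
        = C.mkQ (Pi.single i ((d i : ZMod 2))) := fun _ => rfl
    simp only [h3, ← map_sum]
    have h4 : (∑ i : Fin n, Pi.single i ((d i : ZMod 2)) : Fin n → ZMod 2) = wdOf d :=
      Finset.univ_sum_single (wdOf d)
    rw [h4]
    rfl
  rw [key, Finset.prod_const_one, AddMonoidAlgebra.coe_algebraMap]
  simp [AddMonoidAlgebra.single_mul_single]

theorem wdOf_expOf {n : ℕ} (w : Fin n → ZMod 2) : wdOf (expOf w) = w := by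
  funext j
  show (((expOf w) j : ℕ) : ZMod 2) = w j
  have : (expOf w) j = (w j).val := rfl
  rw [this]
  exact ZMod.natCast_rightInverse (w j)

theorem qmap_Xw (K : Type*) [Field K] {n : ℕ}
    (C : Submodule (ZMod 2) (Fin n → ZMod 2)) (w : Fin n → ZMod 2) :
    qmap K C (Xw K w) = AddMonoidAlgebra.single (Submodule.Quotient.mk w) 1 := by
  rw [Xw, qmap_monomial, wdOf_expOf]

theorem codeIdeal_le_ker (K : Type*) [Field K] {n : ℕ}
    (C : Submodule (ZMod 2) (Fin n → ZMod 2)) :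
    codeIdeal K C ≤ RingHom.ker (qmap K C) := by
  rw [codeIdeal, Ideal.span_le]
  rintro f (⟨c, c', hcc, rfl⟩ | ⟨i, rfl⟩)
  · have : Submodule.Quotient.mk (p := C) c = Submodule.Quotient.mk c' :=
      (Submodule.Quotient.eq C).mpr hcc
    simp [RingHom.mem_ker, map_sub, qmap_Xw, this]
  · have hX : qmap K C (X i) = AddMonoidAlgebra.single
        (Submodule.Quotient.mk (p := C) (Pi.single i 1)) 1 := by
      rw [qmap]; simp
    have h2 : (2 : ℕ) • Submodule.Quotient.mk (p := C) (Pi.single i 1) = 0 := by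
      show (2 : ℕ) • C.mkQ (Pi.single i 1) = 0
      rw [← map_nsmul C.mkQ]
      have : (2 : ℕ) • (Pi.single i (1 : ZMod 2) : Fin n → ZMod 2) = 0 := by
        funext j
        rw [Pi.smul_apply, Pi.zero_apply]
        by_cases hji : j = i
        · subst hji; rw [Pi.single_eq_same]; decide
        · rw [Pi.single_eq_of_ne hji, smul_zero]
      rw [this, map_zero]
    show qmap K C (X i ^ 2 - 1) = 0
    simp only [map_sub, map_pow, map_one, hX,
      AddMonoidAlgebra.single_pow, one_pow, h2]
    rw [AddMonoidAlgebra.one_def]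
    simp

/-- In a standard-form code, an element vanishing on the first `k` coordinates is zero. -/
theorem eq_zero_of_firstk {n k : ℕ} (hk : k ≤ n)
    (C : Submodule (ZMod 2) (Fin n → ZMod 2)) (g : Fin k → Fin n → ZMod 2)
    (hg : IsStandardGenMatrix hk C g) (x : Fin n → ZMod 2) (hx : x ∈ C)
    (h0 : ∀ i : Fin k, x (Fin.castLE hk i) = 0) : x = 0 := by
  classical
  set L : (Fin n → ZMod 2) →ₗ[ZMod 2] (Fin n → ZMod 2) :=
    ∑ i : Fin k, (LinearMap.proj (Fin.castLE hk i) :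
      (Fin n → ZMod 2) →ₗ[ZMod 2] ZMod 2).smulRight (g i) with hL
  have hLx : ∀ y, L y = ∑ i : Fin k, y (Fin.castLE hk i) • g i := by
    intro y
    rw [hL]
    simp [LinearMap.sum_apply]
  have hfix : C ≤ LinearMap.eqLocus L LinearMap.id := by
    rw [hg.1]
    rw [Submodule.span_le]
    rintro _ ⟨i, rfl⟩
    show L (g i) = g i
    rw [hLx]
    simp only [hg.2]
    simp [ite_smul]
  have : L x = x := hfix hx
  rw [hLx] at this
  simp only [h0, zero_smul, Finset.sum_const_zero] at this
  exact this.symm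


theorem leadExp_sub_monomial {σ K : Type*} [Field K] [LinearOrder σ] [WellFoundedGT σ]
    {a b : σ →₀ ℕ} (h : toLex b < toLex a) :
    leadExp MonomialOrder.lex (monomial a (1 : K) - monomial b 1) = a := by
  classical
  have hne : b ≠ a := fun h' => by subst h'; exact lt_irrefl _ h
  set f : MvPolynomial σ K := monomial a 1 - monomial b 1 with hf
  have hsupp : f.support ⊆ {a, b} := by
    intro d hd
    rw [MvPolynomial.mem_support_iff] at hd
    by_contra hd'
    simp only [Finset.mem_insert, Finset.mem_singleton, not_or] at hd'
    apply hd
    rw [hf, coeff_sub, coeff_monomial, coeff_monomial,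
      if_neg (fun h' => hd'.1 h'.symm), if_neg (fun h' => hd'.2 h'.symm), sub_zero]
  have ha : a ∈ f.support := by
    rw [MvPolynomial.mem_support_iff, hf, coeff_sub, coeff_monomial, coeff_monomial,
      if_pos rfl, if_neg hne]
    simp
  have hsup : (f.support.sup fun d => (MonomialOrder.lex (σ := σ)).toSyn d)
      = (MonomialOrder.lex (σ := σ)).toSyn a := by
    apply le_antisymm
    · apply Finset.sup_le
      intro d hd
      rcases Finset.mem_insert.mp (hsupp hd) with rfl | hd2
      · exact le_rfl
      · rw [Finset.mem_singleton] at hd2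
        subst hd2
        exact (MonomialOrder.lex_lt_iff.mpr h).le
    · exact Finset.le_sup ha
  rw [leadExp, hsup, AddEquiv.symm_apply_apply]

theorem qmap_eq_zero_reduced {K : Type*} [Field K] {n k : ℕ} (hk : k ≤ n)
    (C : Submodule (ZMod 2) (Fin n → ZMod 2)) (g : Fin k → Fin n → ZMod 2)
    (hg : IsStandardGenMatrix hk C g) (p : MvPolynomial (Fin n) K)
    (hred : ∀ d ∈ p.support, (∀ j : Fin n, (j : ℕ) < k → d j = 0) ∧ ∀ j : Fin n, d j ≤ 1)
    (hp : qmap K C p = 0) : p = 0 := by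
  classical
  -- injectivity of `d ↦ mk (wdOf d)` on reduced exponents
  have hinj : ∀ d ∈ p.support, ∀ d' ∈ p.support,
      Submodule.Quotient.mk (p := C) (wdOf d) = Submodule.Quotient.mk (wdOf d') → d = d' := by
    intro d hd d' hd' hmk
    have hmem : wdOf d - wdOf d' ∈ C := (Submodule.Quotient.eq C).mp hmk
    have hz : wdOf d - wdOf d' = 0 := by
      refine eq_zero_of_firstk hk C g hg _ hmem ?_
      intro i
      have h1 : ((Fin.castLE hk i : Fin n) : ℕ) < k := by
        exact i.2
      show wdOf d (Fin.castLE hk i) - wdOf d' (Fin.castLE hk i) = 0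
      rw [show wdOf d (Fin.castLE hk i) = 0 by
          simp [wdOf, (hred d hd).1 _ h1],
        show wdOf d' (Fin.castLE hk i) = 0 by
          simp [wdOf, (hred d' hd').1 _ h1], sub_zero]
    have hw : wdOf d = wdOf d' := by
      rwa [sub_eq_zero] at hz
    ext j
    have h1 : d j ≤ 1 := (hred d hd).2 j
    have h2 : d' j ≤ 1 := (hred d' hd').2 j
    have := congrFun hw j
    simp only [wdOf] at this
    interval_cases hdj : d j <;> interval_cases hdj' : d' j <;>
      simp_all
  -- express `qmap p` as a sum of singles and read coefficients
  have hexp : qmap K C p = ∑ d ∈ p.support,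
      AddMonoidAlgebra.single (Submodule.Quotient.mk (p := C) (wdOf d)) (p.coeff d) := by
    conv_lhs => rw [← p.support_sum_monomial_coeff]
    rw [map_sum]
    exact Finset.sum_congr rfl fun d _ => qmap_monomial K C d (p.coeff d)
  ext d
  rw [coeff_zero]
  by_cases hd : d ∈ p.support
  · have := hp
    rw [hexp] at this
    have happ := congrArg (fun q => q.coeff (Submodule.Quotient.mk (p := C) (wdOf d))) this
    simp only [AddMonoidAlgebra.coeff_zero, AddMonoidAlgebra.coeff_sum, Finsupp.coe_zero, Pi.zero_apply] at happ
    rw [Finset.sum_apply'] at happ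
    rw [← happ]
    rw [Finset.sum_eq_single_of_mem d hd]
    · rw [AddMonoidAlgebra.coeff_single_apply, if_pos rfl]
    · intro d' hd' hne
      rw [AddMonoidAlgebra.coeff_single_apply, if_neg]
      intro heq
      exact hne (hinj d' hd' d hd heq)
  · exact MvPolynomial.notMem_support_iff.mp hd

theorem remainder_reduced {K : Type*} [Field K] {n k : ℕ} (hk : k ≤ n)
    {I : Ideal (MvPolynomial (Fin n) K)} (g : Fin k → Fin n → ZMod 2)
    {f r : MvPolynomial (Fin n) K}
    (hr : IsRemainder MonomialOrder.lex I (gbSet K hk g) f r) :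
    ∀ c ∈ r.support, (∀ j : Fin n, (j : ℕ) < k → c j = 0) ∧ ∀ j : Fin n, c j ≤ 1 := by
  intro c hc
  have part1 : ∀ j : Fin n, (j : ℕ) < k → c j = 0 := by
    intro j hj
    set i : Fin k := ⟨(j : ℕ), hj⟩ with hi
    have hji : (Fin.castLE hk i : Fin n) = j := by
      apply Fin.ext
      rfl
    set b : MvPolynomial (Fin n) K := X (Fin.castLE hk i) - Xw K (mrow g i) with hb
    have hmem : b ∈ gbSet K hk g := Or.inl ⟨i, rfl⟩
    have hbform : b = monomial (Finsupp.single (Fin.castLE hk i) 1) 1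
        - monomial (expOf (mrow g i)) 1 := by
      rw [hb, Xw, show (X (Fin.castLE hk i) : MvPolynomial (Fin n) K)
        = monomial (Finsupp.single (Fin.castLE hk i) 1) 1 from
        (pow_one (X (Fin.castLE hk i))).symm.trans MvPolynomial.X_pow_eq_monomial]
    have hlt : toLex (expOf (mrow g i)) < toLex (Finsupp.single (Fin.castLE hk i) 1) := by
      rw [Finsupp.Lex.lt_iff]
      refine ⟨Fin.castLE hk i, ?_, ?_⟩
      · intro j' hj'
        rw [hji] at hj'
        have hj'k : (j' : ℕ) < k := Nat.lt_trans (Fin.lt_def.mp hj') hj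
        show (expOf (mrow g i)) j' = (Finsupp.single (Fin.castLE hk i) 1) j'
        rw [Finsupp.single_apply, if_neg (by rw [hji]; exact ne_of_gt hj')]
        simp [expOf, mrow, hj'k]
      · show (expOf (mrow g i)) (Fin.castLE hk i)
            < (Finsupp.single (Fin.castLE hk i) 1) (Fin.castLE hk i)
        rw [Finsupp.single_eq_same, hji]
        simp [expOf, mrow, hj]
    have hlead : leadExp MonomialOrder.lex b = Finsupp.single (Fin.castLE hk i) 1 := by
      rw [hbform]
      exact leadExp_sub_monomial hlt
    have hne' : expOf (mrow g i) ≠ Finsupp.single (Fin.castLE hk i) 1 :=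
      fun h => absurd hlt (by rw [h]; exact lt_irrefl _)
    have hbne : b ≠ 0 := by
      intro h0
      have h1 : b.coeff (Finsupp.single (Fin.castLE hk i) 1) = 1 := by
        rw [hbform, coeff_sub, coeff_monomial, coeff_monomial, if_pos rfl, if_neg hne',
          sub_zero]
      rw [h0, coeff_zero] at h1
      exact zero_ne_one h1
    have hno := hr.2 c hc b hmem hbne
    rw [hlead] at hno
    rw [Finsupp.single_le_iff] at hno
    have : c (Fin.castLE hk i) = 0 := by omega
    rwa [hji] at this
  refine ⟨part1, ?_⟩
  intro j
  by_cases hj : (j : ℕ) < k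
  · rw [part1 j hj]
    omega
  · push_neg at hj
    set b : MvPolynomial (Fin n) K := X j ^ 2 - 1 with hb
    have hmem : b ∈ gbSet K hk g := Or.inr ⟨j, hj, rfl⟩
    have hbform : b = monomial (Finsupp.single j 2) 1 - monomial 0 1 := by
      rw [hb, MvPolynomial.X_pow_eq_monomial, MvPolynomial.monomial_zero', MvPolynomial.C_1]
    have hlt : toLex (0 : Fin n →₀ ℕ) < toLex (Finsupp.single j 2) := by
      rw [Finsupp.Lex.lt_iff]
      refine ⟨j, ?_, ?_⟩
      · intro j' hj'
        show (0 : Fin n →₀ ℕ) j' = (Finsupp.single j 2) j'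
        rw [Finsupp.single_apply, if_neg (fun h => absurd h (ne_of_gt hj'))]
        rfl
      · show (0 : Fin n →₀ ℕ) j < (Finsupp.single j 2) j
        rw [Finsupp.single_apply, if_pos rfl]
        exact Nat.zero_lt_two
    have hlead : leadExp MonomialOrder.lex b = Finsupp.single j 2 := by
      rw [hbform]
      exact leadExp_sub_monomial hlt
    have hne' : (0 : Fin n →₀ ℕ) ≠ Finsupp.single j 2 :=
      fun h => absurd hlt (by rw [h]; exact lt_irrefl _)
    have hbne : b ≠ 0 := by
      intro h0
      have h1 : b.coeff (Finsupp.single j 2) = 1 := by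
        rw [hbform, coeff_sub, coeff_monomial, coeff_monomial, if_pos rfl, if_neg hne',
          sub_zero]
      rw [h0, coeff_zero] at h1
      exact zero_ne_one h1
    have hno := hr.2 c hc b hmem hbne
    rw [hlead, Finsupp.single_le_iff] at hno
    omega

/-- for a binary `[n,k]` code `C` with standard-form reduced Groebner basis,
two words `u, v` satisfy `u − v ∈ C` iff the remainders of `X^u − 1` and `X^v − 1` on
division by the basis coincide. -/
theorem sub_mem_code_iff_remainders_eq (K : Type*) [Field K] {n k : ℕ} (hk : k ≤ n)
    (C : Submodule (ZMod 2) (Fin n → ZMod 2)) (g : Fin k → Fin n → ZMod 2)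
    (hg : IsStandardGenMatrix hk C g)
    (u v : Fin n → ZMod 2) (ru rv : MvPolynomial (Fin n) K)
    (hu : IsRemainder MonomialOrder.lex (codeIdeal K C) (gbSet K hk g) (Xw K u - 1) ru)
    (hv : IsRemainder MonomialOrder.lex (codeIdeal K C) (gbSet K hk g) (Xw K v - 1) rv) :
    u - v ∈ C ↔ ru = rv := by
  classical
  have hru := remainder_reduced hk g hu
  have hrv := remainder_reduced hk g hv
  constructor
  · intro h
    have hXuv : Xw K u - Xw K v ∈ codeIdeal K C :=
      Ideal.subset_span (Or.inl ⟨u, v, h, rfl⟩)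
    have hmem : rv - ru ∈ codeIdeal K C := by
      have h2 := Ideal.sub_mem _ (Ideal.sub_mem _ hu.1 hv.1) hXuv
      have h3 : Xw K u - 1 - ru - (Xw K v - 1 - rv) - (Xw K u - Xw K v) = rv - ru := by
        ring
      rwa [h3] at h2
    have hz : qmap K C (rv - ru) = 0 := codeIdeal_le_ker K C hmem
    have hred : ∀ d ∈ (rv - ru).support,
        (∀ j : Fin n, (j : ℕ) < k → d j = 0) ∧ ∀ j : Fin n, d j ≤ 1 := by
      intro d hd
      rcases Finset.mem_union.mp (MvPolynomial.support_sub (Fin n) rv ru hd) with h1 | h1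
      exacts [hrv d h1, hru d h1]
    have h0 := qmap_eq_zero_reduced hk C g hg _ hred hz
    exact (sub_eq_zero.mp h0).symm
  · intro h
    subst h
    have hmem : Xw K u - Xw K v ∈ codeIdeal K C := by
      have h2 := Ideal.sub_mem _ hu.1 hv.1
      have h3 : Xw K u - 1 - ru - (Xw K v - 1 - ru) = Xw K u - Xw K v := by ring
      rwa [h3] at h2
    have hz := codeIdeal_le_ker K C hmem
    rw [RingHom.mem_ker, map_sub, qmap_Xw, qmap_Xw, sub_eq_zero] at hz
    have hq : Submodule.Quotient.mk (p := C) u = Submodule.Quotient.mk v :=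
      (AddMonoidAlgebra.single_left_inj (one_ne_zero (α := K))).mp hz
    exact (Submodule.Quotient.eq C).mp hq
end

section
/- For the [7,4] binary code with generator matrix rows (1,0,0,0,1,1,1), (0,1,0,0,0,1,1), (0,0,1,0,1,0,1), (0,0,0,1,1,1,0), the set {X_1 − X_5X_6X_7, X_2 − X_6X_7, X_3 − X_5X_7, X_4 − X_5X_6, X_5^2 − 1, X_6^2 − 1, X_7^2 − 1} is a Groebner basis of the code ideal I_C with respect to lex order X_1 > ... > X_7. -/
open MvPolynomial
open scoped MonomialOrder

/-- The `[7,4]` binary Hamming code, spanned by the rows of its standard-form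
generator matrix. -/
noncomputable def hammingC : Submodule (ZMod 2) (Fin 7 → ZMod 2) :=
  Submodule.span (ZMod 2)
    {![1,0,0,0,1,1,1], ![0,1,0,0,0,1,1], ![0,0,1,0,1,0,1], ![0,0,0,1,1,1,0]}

/-- The Groebner basis from the example (variables `X_1,…,X_7` are `X 0,…,X 6`). -/
noncomputable def hammingGB (K : Type*) [Field K] : Set (MvPolynomial (Fin 7) K) :=
  { X 0 - X 4 * X 5 * X 6, X 1 - X 5 * X 6, X 2 - X 4 * X 6, X 3 - X 4 * X 5,
    X 4 ^ 2 - 1, X 5 ^ 2 - 1, X 6 ^ 2 - 1 }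


/- ===================== auxiliary development ===================== -/

namespace HGB

open Finsupp

/-- columns of a parity map killing the Hamming code -/
def v : Fin 7 → Fin 3 → ZMod 2
  | 0 => ![1,1,1]
  | 1 => ![0,1,1]
  | 2 => ![1,0,1]
  | 3 => ![1,1,0]
  | 4 => ![1,0,0]
  | 5 => ![0,1,0]
  | 6 => ![0,0,1]

noncomputable def A : Fin 7 → (Fin 7 →₀ ℕ)
  | 0 => Finsupp.single 0 1
  | 1 => Finsupp.single 1 1
  | 2 => Finsupp.single 2 1
  | 3 => Finsupp.single 3 1
  | 4 => Finsupp.single 4 2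
  | 5 => Finsupp.single 5 2
  | 6 => Finsupp.single 6 2

noncomputable def Bv : Fin 7 → (Fin 7 →₀ ℕ)
  | 0 => Finsupp.single 4 1 + Finsupp.single 5 1 + Finsupp.single 6 1
  | 1 => Finsupp.single 5 1 + Finsupp.single 6 1
  | 2 => Finsupp.single 4 1 + Finsupp.single 6 1
  | 3 => Finsupp.single 4 1 + Finsupp.single 5 1
  | 4 => 0
  | 5 => 0
  | 6 => 0

noncomputable def B (K : Type*) [Field K] (i : Fin 7) : MvPolynomial (Fin 7) K :=
  monomial (A i) 1 - monomial (Bv i) 1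

lemma Bv_lt_A (i : Fin 7) : toLex (Bv i) < toLex (A i) := by
  have H : ∀ k : Fin 7, (∀ j, j < k → (Bv i) j = (A i) j) → (Bv i) k < (A i) k →
      toLex (Bv i) < toLex (A i) := fun k h1 h2 => Finsupp.Lex.lt_iff.mpr ⟨k, h1, h2⟩
  fin_cases i
  · exact H 0 (fun j hj => by revert hj; fin_cases j <;> intro hj <;>
      first | exact absurd hj (by decide) | simp [A, Bv, Finsupp.single_apply])
      (by simp [A, Bv, Finsupp.single_apply])
  · exact H 1 (fun j hj => by revert hj; fin_cases j <;> intro hj <;>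
      first | exact absurd hj (by decide) | simp [A, Bv, Finsupp.single_apply])
      (by simp [A, Bv, Finsupp.single_apply])
  · exact H 2 (fun j hj => by revert hj; fin_cases j <;> intro hj <;>
      first | exact absurd hj (by decide) | simp [A, Bv, Finsupp.single_apply])
      (by simp [A, Bv, Finsupp.single_apply])
  · exact H 3 (fun j hj => by revert hj; fin_cases j <;> intro hj <;>
      first | exact absurd hj (by decide) | simp [A, Bv, Finsupp.single_apply])
      (by simp [A, Bv, Finsupp.single_apply])
  · exact H 4 (fun j hj => by revert hj; fin_cases j <;> intro hj <;>
      first | exact absurd hj (by decide) | simp [A, Bv, Finsupp.single_apply])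
      (by simp [A, Bv, Finsupp.single_apply])
  · exact H 5 (fun j hj => by revert hj; fin_cases j <;> intro hj <;>
      first | exact absurd hj (by decide) | simp [A, Bv, Finsupp.single_apply])
      (by simp [A, Bv, Finsupp.single_apply])
  · exact H 6 (fun j hj => by revert hj; fin_cases j <;> intro hj <;>
      first | exact absurd hj (by decide) | simp [A, Bv, Finsupp.single_apply])
      (by simp [A, Bv, Finsupp.single_apply])

lemma A_ne_Bv (i : Fin 7) : A i ≠ Bv i :=
  fun h => absurd (h ▸ Bv_lt_A i) (lt_irrefl _)

variable {K : Type*} [Field K]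

/- ------------- generic leadExp lemmas ------------- -/

section Lead

variable {σ : Type*} (m : MonomialOrder σ)

lemma toSyn_leadExp (f : MvPolynomial σ K) :
    m.toSyn (leadExp m f) = f.support.sup fun d => m.toSyn d := by
  simp [leadExp]

lemma le_toSyn_leadExp {f : MvPolynomial σ K} {d : σ →₀ ℕ} (hd : d ∈ f.support) :
    m.toSyn d ≤ m.toSyn (leadExp m f) := by
  rw [toSyn_leadExp]; exact Finset.le_sup hd

lemma leadExp_mem {f : MvPolynomial σ K} (hf : f ≠ 0) : leadExp m f ∈ f.support := by
  obtain ⟨b, hb, hb2⟩ := Finset.exists_mem_eq_sup f.support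
    (MvPolynomial.support_nonempty.mpr hf) (fun d => m.toSyn d)
  have : leadExp m f = b := by
    rw [leadExp, hb2]; exact m.toSyn.symm_apply_apply b
  rwa [this]

end Lead

lemma coeff_B (i : Fin 7) : MvPolynomial.coeff (A i) (B K i) = 1 := by
  rw [B, MvPolynomial.coeff_sub, MvPolynomial.coeff_monomial, MvPolynomial.coeff_monomial,
    if_pos rfl, if_neg (fun h => A_ne_Bv i h.symm), sub_zero]

lemma B_ne_zero (i : Fin 7) : B K i ≠ 0 := fun h => by
  have := coeff_B (K := K) i
  rw [h] at this
  simp at this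

lemma leadExp_B (i : Fin 7) : leadExp MonomialOrder.lex (B K i) = A i := by
  have h1 : MonomialOrder.lex.toSyn (leadExp MonomialOrder.lex (B K i)) = toLex (A i) := by
    rw [toSyn_leadExp]
    apply le_antisymm
    · apply Finset.sup_le
      intro d hd
      have := MvPolynomial.support_sub (Fin 7) (monomial (A i) (1:K)) (monomial (Bv i) 1) hd
      rcases Finset.mem_union.mp this with h | h
      · rcases Finset.mem_singleton.mp (MvPolynomial.support_monomial_subset h) with rfl
        exact le_rfl
      · rcases Finset.mem_singleton.mp (MvPolynomial.support_monomial_subset h) with rfl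
        exact le_of_lt (Bv_lt_A i)
    · exact Finset.le_sup (f := fun d => MonomialOrder.lex.toSyn d)
        (MvPolynomial.mem_support_iff.mpr (by rw [coeff_B]; exact one_ne_zero))
  have := congrArg MonomialOrder.lex.toSyn.symm h1
  rwa [MonomialOrder.lex.toSyn.symm_apply_apply] at this

lemma leadTerm_B (i : Fin 7) : leadTerm MonomialOrder.lex (B K i) = monomial (A i) (1:K) := by
  rw [leadTerm, leadExp_B, coeff_B]

/- ------------- standard monomials and reduction ------------- -/

def Std (d : Fin 7 →₀ ℕ) : Prop := ∀ i, ¬ A i ≤ d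

lemma reduce (d : Fin 7 →₀ ℕ) :
    ∃ s : Fin 7 →₀ ℕ, Std s ∧ toLex s ≤ toLex d ∧
      (monomial d 1 - monomial s 1 : MvPolynomial (Fin 7) K) ∈ Ideal.span (Set.range (B K)) := by
  have wf : WellFounded fun x y : Fin 7 →₀ ℕ => toLex x < toLex y :=
    InvImage.wf _ (wellFounded_lt (α := Lex (Fin 7 →₀ ℕ)))
  induction d using wf.induction with
  | _ d ih =>
    by_cases hd : Std d
    · exact ⟨d, hd, le_rfl, by simp⟩
    · simp only [Std, not_forall, not_not] at hd
      obtain ⟨i, hi⟩ := hd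
      set d₁ := d - A i + Bv i with hd₁
      have hlt : toLex d₁ < toLex d := by
        calc toLex d₁ = toLex (d - A i) + toLex (Bv i) := toLex_add _ _
        _ < toLex (d - A i) + toLex (A i) := by
            exact add_lt_add_right (Bv_lt_A i) _
        _ = toLex ((d - A i) + A i) := (toLex_add _ _).symm
        _ = toLex d := by rw [tsub_add_cancel_of_le hi]
      obtain ⟨s, hs, hsle, hmem⟩ := ih d₁ hlt
      refine ⟨s, hs, le_trans hsle (le_of_lt hlt), ?_⟩
      have key : (monomial d 1 - monomial d₁ 1 : MvPolynomial (Fin 7) K)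
          = monomial (d - A i) 1 * B K i := by
        rw [B, mul_sub, MvPolynomial.monomial_mul, MvPolynomial.monomial_mul,
          tsub_add_cancel_of_le hi, one_mul, hd₁]
      have h1 : (monomial d 1 - monomial d₁ 1 : MvPolynomial (Fin 7) K)
          ∈ Ideal.span (Set.range (B K)) := by
        rw [key]
        exact Ideal.mul_mem_left _ _ (Ideal.subset_span ⟨i, rfl⟩)
      have := Ideal.add_mem _ h1 hmem
      simpa using this

lemma not_std_iff {d : Fin 7 →₀ ℕ} : ¬ Std d ↔ ∃ i, A i ≤ d := by
  simp [Std]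

lemma std_explicit {d : Fin 7 →₀ ℕ} (hd : Std d) :
    d 0 = 0 ∧ d 1 = 0 ∧ d 2 = 0 ∧ d 3 = 0 ∧ d 4 ≤ 1 ∧ d 5 ≤ 1 ∧ d 6 ≤ 1 := by
  have h := fun i => hd i
  have h0 := h 0; have h1 := h 1; have h2 := h 2; have h3 := h 3
  have h4 := h 4; have h5 := h 5; have h6 := h 6
  simp only [A, Finsupp.single_le_iff, not_le, Nat.lt_one_iff] at h0 h1 h2 h3 h4 h5 h6
  exact ⟨h0, h1, h2, h3, by omega, by omega, by omega⟩

/- ------------- the algebra morphism ------------- -/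

noncomputable def w (d : Fin 7 →₀ ℕ) : Fin 3 → ZMod 2 := ∑ j : Fin 7, (d j) • v j

noncomputable def psi (K : Type*) [Field K] :
    MvPolynomial (Fin 7) K →ₐ[K] AddMonoidAlgebra K (Fin 3 → ZMod 2) :=
  aeval fun j => AddMonoidAlgebra.single (v j) 1

lemma psi_monomial (d : Fin 7 →₀ ℕ) (a : K) :
    psi K (monomial d a) = AddMonoidAlgebra.single (w d) a := by
  rw [psi, aeval_monomial]
  have h1 : (d.prod fun n e => AddMonoidAlgebra.single (v n) (1:K) ^ e)
      = AddMonoidAlgebra.single (w d) 1 := by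
    rw [Finsupp.prod]
    have : ∀ n ∈ d.support, AddMonoidAlgebra.single (v n) (1:K) ^ (d n)
        = AddMonoidAlgebra.single ((d n) • v n) 1 := by
      intro n _
      rw [AddMonoidAlgebra.single_pow, one_pow]
    rw [Finset.prod_congr rfl this, AddMonoidAlgebra.prod_single, Finset.prod_const_one]
    congr 1
    rw [w]
    exact Finset.sum_subset (Finset.subset_univ _) (fun j _ hj => by
      rw [Finsupp.notMem_support_iff.mp hj, zero_smul])
  rw [h1]
  rw [show algebraMap K (AddMonoidAlgebra K (Fin 3 → ZMod 2)) a
    = AddMonoidAlgebra.single 0 a by simp [AddMonoidAlgebra.coe_algebraMap]]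
  rw [AddMonoidAlgebra.single_mul_single, zero_add, mul_one]

lemma zmod2_add_self (z : ZMod 2) : z + z = 0 := by revert z; decide

lemma zmod2_val_cast (z : ZMod 2) : ((z.val : ZMod 2)) = z := by revert z; decide

noncomputable def Lmap : (Fin 7 → ZMod 2) →ₗ[ZMod 2] (Fin 3 → ZMod 2) where
  toFun c := ∑ j : Fin 7, c j • v j
  map_add' a b := by
    simp only [Pi.add_apply, add_smul]
    rw [Finset.sum_add_distrib]
  map_smul' r a := by
    simp only [Pi.smul_apply, RingHom.id_apply, smul_assoc]
    rw [Finset.smul_sum]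

lemma w_expOf (c : Fin 7 → ZMod 2) : w (expOf c) = Lmap c := by
  rw [w, Lmap]
  simp only [LinearMap.coe_mk, AddHom.coe_mk]
  apply Finset.sum_congr rfl
  intro j _
  have : (expOf c) j = (c j).val := by simp [expOf]
  rw [this, ← zmod2_val_cast (c j), Nat.cast_smul_eq_nsmul]
  norm_num

lemma hammingC_ker : ∀ x ∈ hammingC, Lmap x = 0 := by
  have hspan : hammingC ≤ LinearMap.ker Lmap := by
    rw [hammingC]
    apply Submodule.span_le.mpr
    intro y hy
    simp only [Set.mem_insert_iff, Set.mem_singleton_iff] at hy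
    refine SetLike.mem_coe.mpr (LinearMap.mem_ker.mpr ?_)
    have e : ∀ z : Fin 7 → ZMod 2, Lmap z = ∑ j : Fin 7, z j • v j := fun z => rfl
    rcases hy with rfl | rfl | rfl | rfl <;>
    · rw [e, Fin.sum_univ_seven]
      funext t
      fin_cases t <;> simp [v] <;> decide
  exact fun x hx => LinearMap.mem_ker.mp (hspan hx)
  
lemma psi_codeIdeal {f : MvPolynomial (Fin 7) K} (hf : f ∈ codeIdeal K hammingC) :
    psi K f = 0 := by
  have : codeIdeal K hammingC ≤ RingHom.ker (psi K).toRingHom := by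
    rw [codeIdeal]
    apply Ideal.span_le.mpr
    rintro g (⟨c, c', hcc, rfl⟩ | ⟨i, rfl⟩)
    · simp only [SetLike.mem_coe, RingHom.mem_ker, AlgHom.toRingHom_eq_coe,
        RingHom.coe_coe, map_sub]
      rw [Xw, Xw, psi_monomial, psi_monomial, w_expOf, w_expOf]
      have : Lmap c = Lmap c' := by
        have := hammingC_ker _ hcc
        rw [map_sub, sub_eq_zero] at this
        exact this
      rw [this, sub_self]
    · simp only [SetLike.mem_coe, RingHom.mem_ker, AlgHom.toRingHom_eq_coe,
        RingHom.coe_coe, map_sub, map_pow, map_one]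
      rw [psi, aeval_X, AddMonoidAlgebra.single_pow, one_pow]
      have : (2 : ℕ) • v i = 0 := by
        rw [two_smul]
        funext t
        exact zmod2_add_self _
      rw [this, ← AddMonoidAlgebra.one_def, sub_self]
  exact RingHom.mem_ker.mp (this hf)

lemma nat_cast_inj_le_one {n m : ℕ} (hn : n ≤ 1) (hm : m ≤ 1) (h : (n : ZMod 2) = m) : n = m := by
  interval_cases n <;> interval_cases m <;> simp_all <;> exact absurd h (by decide)

lemma w_apply_std {s : Fin 7 →₀ ℕ} (hs : Std s) :
    w s 0 = (s 4 : ZMod 2) ∧ w s 1 = (s 5 : ZMod 2) ∧ w s 2 = (s 6 : ZMod 2) := by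
  obtain ⟨h0, h1, h2, h3, _, _, _⟩ := std_explicit hs
  rw [w, Fin.sum_univ_seven]
  simp only [h0, h1, h2, h3, zero_smul, zero_add, add_zero]
  refine ⟨?_, ?_, ?_⟩ <;>
  · simp only [Pi.add_apply, Pi.smul_apply, v, nsmul_eq_mul]
    norm_num [Matrix.cons_val_zero, Matrix.cons_val_one, Matrix.cons_val_two]

lemma w_std_inj {s t : Fin 7 →₀ ℕ} (hs : Std s) (ht : Std t) (h : w s = w t) : s = t := by
  obtain ⟨hs0, hs1, hs2, hs3, hs4, hs5, hs6⟩ := std_explicit hs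
  obtain ⟨ht0, ht1, ht2, ht3, ht4, ht5, ht6⟩ := std_explicit ht
  obtain ⟨e0, e1, e2⟩ := w_apply_std hs
  obtain ⟨f0, f1, f2⟩ := w_apply_std ht
  ext j
  fin_cases j
  · exact hs0.trans ht0.symm
  · exact hs1.trans ht1.symm
  · exact hs2.trans ht2.symm
  · exact hs3.trans ht3.symm
  · exact nat_cast_inj_le_one hs4 ht4 (e0.symm.trans ((congrFun h 0).trans f0))
  · exact nat_cast_inj_le_one hs5 ht5 (e1.symm.trans ((congrFun h 1).trans f1))
  · exact nat_cast_inj_le_one hs6 ht6 (e2.symm.trans ((congrFun h 2).trans f2))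


/- ------------- identification of the basis and membership in the code ideal ------------- -/

lemma X_eq (n : Fin 7) : (X n : MvPolynomial (Fin 7) K) = monomial (Finsupp.single n 1) 1 := rfl

lemma B_eq_0 : B K 0 = X 0 - X 4 * X 5 * X 6 := by
  simp [B, A, Bv, X_eq, MvPolynomial.monomial_mul, add_assoc]

lemma B_eq_1 : B K 1 = X 1 - X 5 * X 6 := by
  simp [B, A, Bv, X_eq, MvPolynomial.monomial_mul]

lemma B_eq_2 : B K 2 = X 2 - X 4 * X 6 := by
  simp [B, A, Bv, X_eq, MvPolynomial.monomial_mul]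

lemma B_eq_3 : B K 3 = X 3 - X 4 * X 5 := by
  simp [B, A, Bv, X_eq, MvPolynomial.monomial_mul]

lemma B_eq_sq (i : Fin 7) (hi : Bv i = 0) (hA : A i = Finsupp.single i 2) :
    B K i = X i ^ 2 - 1 := by
  rw [B, hi, hA, X_pow_eq_monomial]
  simp

lemma B_eq_4 : B K 4 = X 4 ^ 2 - 1 := B_eq_sq 4 rfl rfl
lemma B_eq_5 : B K 5 = X 5 ^ 2 - 1 := B_eq_sq 5 rfl rfl
lemma B_eq_6 : B K 6 = X 6 ^ 2 - 1 := B_eq_sq 6 rfl rfl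

lemma range_B : Set.range (B K) = hammingGB K := by
  apply Set.eq_of_subset_of_subset
  · rintro x ⟨i, rfl⟩
    fin_cases i
    · show B K 0 ∈ _
      rw [B_eq_0]
      simp only [hammingGB, Set.mem_insert_iff, Set.mem_singleton_iff]
      tauto
    · show B K 1 ∈ _
      rw [B_eq_1]
      simp only [hammingGB, Set.mem_insert_iff, Set.mem_singleton_iff]
      tauto
    · show B K 2 ∈ _
      rw [B_eq_2]
      simp only [hammingGB, Set.mem_insert_iff, Set.mem_singleton_iff]
      tauto
    · show B K 3 ∈ _
      rw [B_eq_3]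
      simp only [hammingGB, Set.mem_insert_iff, Set.mem_singleton_iff]
      tauto
    · show B K 4 ∈ _
      rw [B_eq_4]
      simp only [hammingGB, Set.mem_insert_iff, Set.mem_singleton_iff]
      tauto
    · show B K 5 ∈ _
      rw [B_eq_5]
      simp only [hammingGB, Set.mem_insert_iff, Set.mem_singleton_iff]
      tauto
    · show B K 6 ∈ _
      rw [B_eq_6]
      simp only [hammingGB, Set.mem_insert_iff, Set.mem_singleton_iff]
      tauto
  · intro x hx
    simp only [hammingGB, Set.mem_insert_iff, Set.mem_singleton_iff] at hx
    rcases hx with rfl | rfl | rfl | rfl | rfl | rfl | rfl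
    · exact ⟨0, B_eq_0⟩
    · exact ⟨1, B_eq_1⟩
    · exact ⟨2, B_eq_2⟩
    · exact ⟨3, B_eq_3⟩
    · exact ⟨4, B_eq_4⟩
    · exact ⟨5, B_eq_5⟩
    · exact ⟨6, B_eq_6⟩

lemma expOf_apply (c : Fin 7 → ZMod 2) (j : Fin 7) : expOf c j = (c j).val := rfl

lemma monomial_eq_Xw {c : Fin 7 → ZMod 2} {d : Fin 7 →₀ ℕ} (h : ∀ j, d j = (c j).val) :
    (monomial d 1 : MvPolynomial (Fin 7) K) = Xw K c := by
  have hde : d = expOf c := Finsupp.ext fun j => by rw [expOf_apply, h]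
  rw [Xw, hde]

lemma binom_mem (c c' : Fin 7 → ZMod 2) (a b : Fin 7 →₀ ℕ)
    (ha : ∀ j, a j = (c j).val) (hb : ∀ j, b j = (c' j).val)
    (hC : c - c' ∈ hammingC) :
    (monomial a 1 - monomial b 1 : MvPolynomial (Fin 7) K) ∈ codeIdeal K hammingC := by
  rw [monomial_eq_Xw ha, monomial_eq_Xw hb, codeIdeal]
  exact Ideal.subset_span (Or.inl ⟨c, c', hC, rfl⟩)

lemma gen_mem (y : Fin 7 → ZMod 2)
    (hy : y ∈ ({![1,0,0,0,1,1,1], ![0,1,0,0,0,1,1], ![0,0,1,0,1,0,1], ![0,0,0,1,1,1,0]} :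
      Set (Fin 7 → ZMod 2))) : y ∈ hammingC :=
  Submodule.subset_span hy

lemma B_mem (i : Fin 7) : B K i ∈ codeIdeal K hammingC := by
  fin_cases i
  · refine binom_mem ![1,0,0,0,0,0,0] ![0,0,0,0,1,1,1] (A 0) (Bv 0) ?_ ?_
      (by
        have h : (![1,0,0,0,0,0,0] - ![0,0,0,0,1,1,1] : Fin 7 → ZMod 2) = ![1,0,0,0,1,1,1] := by
          decide
        rw [h]; exact gen_mem _ (by simp))
    · intro j; fin_cases j <;> simp [A, Finsupp.single_apply] <;> decide
    · intro j; fin_cases j <;> simp [Bv, Finsupp.single_apply] <;> decide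
  · refine binom_mem ![0,1,0,0,0,0,0] ![0,0,0,0,0,1,1] (A 1) (Bv 1) ?_ ?_
      (by
        have h : (![0,1,0,0,0,0,0] - ![0,0,0,0,0,1,1] : Fin 7 → ZMod 2) = ![0,1,0,0,0,1,1] := by
          decide
        rw [h]; exact gen_mem _ (by simp))
    · intro j; fin_cases j <;> simp [A, Finsupp.single_apply] <;> decide
    · intro j; fin_cases j <;> simp [Bv, Finsupp.single_apply] <;> decide
  · refine binom_mem ![0,0,1,0,0,0,0] ![0,0,0,0,1,0,1] (A 2) (Bv 2) ?_ ?_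
      (by
        have h : (![0,0,1,0,0,0,0] - ![0,0,0,0,1,0,1] : Fin 7 → ZMod 2) = ![0,0,1,0,1,0,1] := by
          decide
        rw [h]; exact gen_mem _ (by simp))
    · intro j; fin_cases j <;> simp [A, Finsupp.single_apply] <;> decide
    · intro j; fin_cases j <;> simp [Bv, Finsupp.single_apply] <;> decide
  · refine binom_mem ![0,0,0,1,0,0,0] ![0,0,0,0,1,1,0] (A 3) (Bv 3) ?_ ?_
      (by
        have h : (![0,0,0,1,0,0,0] - ![0,0,0,0,1,1,0] : Fin 7 → ZMod 2) = ![0,0,0,1,1,1,0] := by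
          decide
        rw [h]; exact gen_mem _ (by simp))
    · intro j; fin_cases j <;> simp [A, Finsupp.single_apply] <;> decide
    · intro j; fin_cases j <;> simp [Bv, Finsupp.single_apply] <;> decide
  · show B K 4 ∈ _; rw [B_eq_4, codeIdeal]
    exact Ideal.subset_span (Or.inr ⟨4, rfl⟩)
  · show B K 5 ∈ _; rw [B_eq_5, codeIdeal]
    exact Ideal.subset_span (Or.inr ⟨5, rfl⟩)
  · show B K 6 ∈ _; rw [B_eq_6, codeIdeal]
    exact Ideal.subset_span (Or.inr ⟨6, rfl⟩)

lemma span_B_le : Ideal.span (Set.range (B K)) ≤ codeIdeal K hammingC :=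
  Ideal.span_le.mpr (by rintro x ⟨i, rfl⟩; exact B_mem i)

/- ------------- the key leading-exponent lemma ------------- -/

lemma exists_A_le_leadExp {f : MvPolynomial (Fin 7) K} (hf : f ∈ codeIdeal K hammingC)
    (h0 : f ≠ 0) : ∃ i, A i ≤ leadExp MonomialOrder.lex f := by
  by_contra hcon
  push_neg at hcon
  set D := leadExp MonomialOrder.lex f with hD
  have hDstd : Std D := fun i => hcon i
  have hpsi : psi K f = 0 := psi_codeIdeal hf
  have hsum : (0 : AddMonoidAlgebra K (Fin 3 → ZMod 2))
      = ∑ d ∈ f.support, AddMonoidAlgebra.single (w d) (MvPolynomial.coeff d f) := by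
    rw [← hpsi]
    conv_lhs => rw [f.as_sum]
    rw [map_sum]
    exact Finset.sum_congr rfl fun d _ => psi_monomial d _
  have happ := congrArg (fun g : AddMonoidAlgebra K (Fin 3 → ZMod 2) => g.coeff (w D)) hsum
  rw [AddMonoidAlgebra.coeff_sum, Finsupp.finset_sum_apply] at happ
  simp only [AddMonoidAlgebra.coeff_zero, Finsupp.coe_zero, Pi.zero_apply] at happ
  have hterm : ∀ d ∈ f.support, d ≠ D →
      (AddMonoidAlgebra.single (w d) (MvPolynomial.coeff d f)).coeff (w D) = 0 := by
    intro d hd hne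
    obtain ⟨sd, hsd_std, hsd_le, hsd_mem⟩ := reduce (K := K) d
    have hwd : w d = w sd := by
      have h0' : psi K (monomial d 1 - monomial sd 1) = 0 := psi_codeIdeal (span_B_le hsd_mem)
      rw [map_sub, psi_monomial, psi_monomial, sub_eq_zero] at h0'
      exact (AddMonoidAlgebra.single_left_inj one_ne_zero).mp h0'
    have hdD : toLex d < toLex D := by
      have hle : MonomialOrder.lex.toSyn d ≤ MonomialOrder.lex.toSyn D := le_toSyn_leadExp _ hd
      have hne' : MonomialOrder.lex.toSyn d ≠ MonomialOrder.lex.toSyn D :=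
        fun hEq => hne (MonomialOrder.lex.toSyn.injective hEq)
      exact lt_of_le_of_ne hle hne'
    have hsdD : sd ≠ D := by
      intro hEq
      rw [hEq] at hsd_le
      exact absurd (lt_of_le_of_lt hsd_le hdD) (lt_irrefl _)
    have hws : w sd ≠ w D := fun hEq => hsdD (w_std_inj hsd_std hDstd hEq)
    rw [AddMonoidAlgebra.coeff_single, Finsupp.single_apply, if_neg (by rw [hwd]; exact hws)]
  have hDmem : D ∈ f.support := leadExp_mem _ h0
  have hsum2 : ∑ d ∈ f.support,
      (AddMonoidAlgebra.single (w d) (MvPolynomial.coeff d f)).coeff (w D)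
      = MvPolynomial.coeff D f := by
    rw [Finset.sum_eq_single_of_mem D hDmem hterm, AddMonoidAlgebra.coeff_single, Finsupp.single_apply, if_pos rfl]
  rw [← happ] at hsum2
  exact absurd hsum2.symm (MvPolynomial.mem_support_iff.mp hDmem)


end HGB

/-- the displayed set is a Groebner basis of the code ideal of the
`[7,4]` Hamming code with respect to the lexicographic order `X_1 > ⋯ > X_7`. -/
theorem hamming_groebner_basis (K : Type*) [Field K] :
    IsGroebnerBasis MonomialOrder.lex (codeIdeal K hammingC) (hammingGB K) := by
  have hrange : hammingGB K = Set.range (HGB.B K) := (HGB.range_B).symm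
  refine ⟨?_, ?_, le_antisymm ?_ ?_⟩
  · rw [hrange]; exact Set.finite_range _
  · rw [hrange]; rintro x ⟨i, rfl⟩; exact HGB.B_mem i
  · apply Ideal.span_le.mpr
    rintro x ⟨g, hg, rfl⟩
    rw [hrange] at hg
    obtain ⟨i, rfl⟩ := hg
    exact Ideal.subset_span ⟨HGB.B K i, ⟨HGB.B_mem i, HGB.B_ne_zero i⟩, rfl⟩
  · apply Ideal.span_le.mpr
    rintro x ⟨g, ⟨hgI, hgne⟩, rfl⟩
    obtain ⟨i, hi⟩ := HGB.exists_A_le_leadExp hgI hgne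
    have key : leadTerm MonomialOrder.lex g
        = monomial (leadExp MonomialOrder.lex g - HGB.A i)
            (g.coeff (leadExp MonomialOrder.lex g)) * monomial (HGB.A i) 1 := by
      rw [MvPolynomial.monomial_mul, tsub_add_cancel_of_le hi, mul_one, leadTerm]
    rw [key, ← HGB.leadTerm_B]
    refine Ideal.mul_mem_left _ _ (Ideal.subset_span ?_)
    exact ⟨HGB.B K i, by rw [hrange]; exact ⟨i, rfl⟩, rfl⟩
end
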